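/- arXiv:2108.08026 — 3 statements merged into one kernel-verified Lean document; each statement's English description precedes it below -/
import Mathlib

section
/- Let X_ε(x) = X⁰(x) + ε X¹(x) + O(ε²) be a C² family of vector fields on ℝⁿ, suppose the unperturbed system ẋ = X⁰(x) has a T-periodic solution γ(t), and suppose F : U → ℝ is a C³ first integral of X⁰ (i.e. dF(X⁰) = 0) on a neighborhood U of the orbit Γ = {γ(t) : t ∈ [0,T)}. If for ε > 0 small the perturbed system ẋ = X_ε(x) has a T_ε-periodic solution γ_ε depending C²-smoothly on ε with T₀ = T and γ₀ = γ, then the integral 𝓘 = ∫₀^T dF(X¹)(γ(t)) dt equals zero. -/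
open MeasureTheory intervalIntegral Set

/-- Persistence of a periodic orbit implies vanishing of the integral
`∫₀^T dF(X¹)(γ(t)) dt` (Theorem 2.1 / `thm:main2`). -/
theorem stmt0 (n : ℕ)
    (X : ℝ → (Fin n → ℝ) → (Fin n → ℝ))
    (hX : ContDiff ℝ 2 (fun q : ℝ × (Fin n → ℝ) => X q.1 q.2))
    (hXx : ∀ ε : ℝ, ContDiff ℝ 3 (X ε))
    (X0 X1 : (Fin n → ℝ) → (Fin n → ℝ))
    (hX0 : ∀ x, X0 x = X 0 x)
    (hX1 : ∀ x, HasDerivAt (fun ε => X ε x) (X1 x) 0)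
    (T : ℝ) (hT : 0 < T)
    (γ : ℝ → Fin n → ℝ)
    (hγ : ∀ t, HasDerivAt γ (X0 (γ t)) t)
    (hper : ∀ t, γ (t + T) = γ t)
    (U : Set (Fin n → ℝ)) (hU : IsOpen U) (hΓU : ∀ t, γ t ∈ U)
    (F : (Fin n → ℝ) → ℝ) (hF : ContDiffOn ℝ 3 F U)
    (hFnc : ∃ x ∈ U, ∃ y ∈ U, F x ≠ F y)
    (hFint : ∀ x ∈ U, fderiv ℝ F x (X0 x) = 0)
    (ε0 : ℝ) (hε0 : 0 < ε0)
    (γε : ℝ → ℝ → Fin n → ℝ) (Tε : ℝ → ℝ)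
    (hsm : ContDiff ℝ 2 (fun q : ℝ × ℝ => γε q.1 q.2))
    (hTsm : ContDiff ℝ 2 Tε)
    (hγε0 : γε 0 = γ) (hTε0 : Tε 0 = T)
    (hsol : ∀ ε ∈ Set.Ico (0:ℝ) ε0, ∀ t, HasDerivAt (γε ε) (X ε (γε ε t)) t)
    (hperε : ∀ ε ∈ Set.Ico (0:ℝ) ε0, ∀ t, γε ε (t + Tε ε) = γε ε t) :
    ∫ t in (0:ℝ)..T, fderiv ℝ F (γ t) (X1 (γ t)) = 0 := by
  have hX0' : X0 = X 0 := funext hX0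
  subst hX0'
  -- Notation
  set XX : ℝ × (Fin n → ℝ) → (Fin n → ℝ) := fun q => X q.1 q.2 with hXXdef
  set Φ : ℝ × ℝ → (Fin n → ℝ) := fun q => γε q.1 q.2 with hΦdef
  set F' : (Fin n → ℝ) → ((Fin n → ℝ) →L[ℝ] ℝ) := fderiv ℝ F with hF'def
  set v : ℝ → (Fin n → ℝ) := fun t => fderiv ℝ Φ (0, t) (1, 0) with hvdef
  -- Basic differentiability facts
  have hΦd : Differentiable ℝ Φ := hsm.differentiable (by norm_num)
  have hΦ1 : ContDiff ℝ 1 (fderiv ℝ Φ) := hsm.fderiv_right (le_refl 2)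
  have hΦ1d : Differentiable ℝ (fderiv ℝ Φ) := hΦ1.differentiable (by norm_num)
  have hXXd : Differentiable ℝ XX := hX.differentiable (by norm_num)
  have hγT : γ T = γ 0 := by simpa using hper 0
  -- derivative along t-lines
  have gA : ∀ a t : ℝ, HasDerivAt (fun s => Φ (a, s)) (fderiv ℝ Φ (a, t) (0, 1)) t := by
    intro a t
    exact (hΦd (a, t)).hasFDerivAt.comp_hasDerivAt t
      ((hasDerivAt_const t a).prodMk (hasDerivAt_id t))
  -- derivative along ε-lines
  have gB : ∀ b ε : ℝ, HasDerivAt (fun s => Φ (s, b)) (fderiv ℝ Φ (ε, b) (1, 0)) ε := by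
    intro b ε
    exact (hΦd (ε, b)).hasFDerivAt.comp_hasDerivAt ε
      ((hasDerivAt_id ε).prodMk (hasDerivAt_const ε b))
  have hΦ0 : ∀ t, Φ (0, t) = γ t := by intro t; simp [hΦdef, hγε0]
  -- ∂t Φ (0,t) = X 0 (γ t)
  have hw : ∀ t, fderiv ℝ Φ (0, t) (0, 1) = X 0 (γ t) := by
    intro t
    refine (gA 0 t).unique ?_
    have : (fun s => Φ (0, s)) = γ := by funext s; exact hΦ0 s
    rw [this]; exact hγ t
  -- ∂t Φ (ε,t) = X ε (γε ε t) for ε ∈ [0, ε0)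
  have hwε : ∀ ε ∈ Set.Ico (0:ℝ) ε0, ∀ t, fderiv ℝ Φ (ε, t) (0, 1) = XX (ε, Φ (ε, t)) := by
    intro ε hε t
    exact (gA ε t).unique (hsol ε hε t)
  -- X1 via the full derivative of XX
  have hX1' : ∀ x, fderiv ℝ XX (0, x) (1, 0) = X1 x := by
    intro x
    refine HasDerivAt.unique ?_ (hX1 x)
    exact (hXXd (0, x)).hasFDerivAt.comp_hasDerivAt (0:ℝ)
      ((hasDerivAt_id (0:ℝ)).prodMk (hasDerivAt_const 0 x))
  -- space derivative of XX at (0,x)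
  have hXx' : ∀ x u, fderiv ℝ XX (0, x) (0, u) = fderiv ℝ (X 0) x u := by
    intro x u
    have h : HasFDerivAt (X 0)
        ((fderiv ℝ XX (0, x)).comp (ContinuousLinearMap.inr ℝ ℝ (Fin n → ℝ))) x :=
      (hXXd (0, x)).hasFDerivAt.comp x (ContinuousLinearMap.inr ℝ ℝ (Fin n → ℝ)).hasFDerivAt
    rw [h.fderiv]; rfl
  -- the variational derivative v satisfies the variational equation
  have hv' : ∀ t, HasDerivAt v (X1 (γ t) + fderiv ℝ (X 0) (γ t) (v t)) t := by
    intro t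
    have hvd : HasDerivAt (fun s => fderiv ℝ Φ (0, s))
        (fderiv ℝ (fderiv ℝ Φ) (0, t) (0, 1)) t :=
      (hΦ1d (0, t)).hasFDerivAt.comp_hasDerivAt t
        ((hasDerivAt_const t (0:ℝ)).prodMk (hasDerivAt_id t))
    have hvD : HasDerivAt v ((fderiv ℝ (fderiv ℝ Φ) (0, t) (0, 1)) (1, 0)) t := by
      simpa using hvd.clm_apply (hasDerivAt_const t ((1:ℝ), (0:ℝ)))
    have sym := second_derivative_symmetric (f := Φ) (f' := fderiv ℝ Φ)
      (fun y => (hΦd y).hasFDerivAt) ((hΦ1d (0, t)).hasFDerivAt)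
    -- derivative of ψ : ε ↦ fderiv Φ (ε,t) (0,1)
    have hψd : HasDerivAt (fun ε => fderiv ℝ Φ (ε, t) (0, 1))
        ((fderiv ℝ (fderiv ℝ Φ) (0, t) (1, 0)) (0, 1)) 0 := by
      have h1 : HasDerivAt (fun ε => fderiv ℝ Φ (ε, t))
          (fderiv ℝ (fderiv ℝ Φ) (0, t) (1, 0)) 0 :=
        (hΦ1d (0, t)).hasFDerivAt.comp_hasDerivAt 0
          ((hasDerivAt_id 0).prodMk (hasDerivAt_const 0 t))
      simpa using h1.clm_apply (hasDerivAt_const 0 ((0:ℝ), (1:ℝ)))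
    -- derivative of χ : ε ↦ XX (ε, Φ (ε,t))
    have hχd : HasDerivAt (fun ε => XX (ε, Φ (ε, t)))
        (fderiv ℝ XX (0, γ t) (1, v t)) 0 := by
      have hc : HasDerivAt (fun ε => ((ε : ℝ), Φ (ε, t))) ((1:ℝ), v t) 0 :=
        (hasDerivAt_id 0).prodMk (gB t 0)
      have := (hXXd (0, Φ (0, t))).hasFDerivAt.comp_hasDerivAt 0 hc
      rwa [hΦ0 t] at this
    have hsplit : fderiv ℝ XX (0, γ t) (1, v t)
        = X1 (γ t) + fderiv ℝ (X 0) (γ t) (v t) := by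
      have : ((1:ℝ), v t) = ((1:ℝ), (0 : Fin n → ℝ)) + ((0:ℝ), v t) := by simp
      rw [this, map_add, hX1', hXx']
    -- ψ = χ on [0, ε0)
    have hmem : Set.Ico (0:ℝ) ε0 ∈ nhdsWithin 0 (Set.Ici (0:ℝ)) := by
      rw [← Set.Ici_inter_Iio]
      exact Filter.inter_mem self_mem_nhdsWithin
        (mem_nhdsWithin_of_mem_nhds (Iio_mem_nhds hε0))
    have hψχ : Set.EqOn (fun ε => fderiv ℝ Φ (ε, t) (0, 1))
        (fun ε => XX (ε, Φ (ε, t))) (Set.Ico (0:ℝ) ε0) := by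
      intro ε hε; exact hwε ε hε t
    have e1 : HasDerivWithinAt (fun ε => fderiv ℝ Φ (ε, t) (0, 1))
        ((fderiv ℝ (fderiv ℝ Φ) (0, t) (1, 0)) (0, 1)) (Set.Ici 0) 0 :=
      hψd.hasDerivWithinAt
    have e2 : HasDerivWithinAt (fun ε => fderiv ℝ Φ (ε, t) (0, 1))
        (fderiv ℝ XX (0, γ t) (1, v t)) (Set.Ici 0) 0 := by
      refine hχd.hasDerivWithinAt.congr_of_eventuallyEq ?_ ?_
      · exact Filter.eventuallyEq_of_mem hmem hψχ
      · exact hψχ ⟨le_refl 0, hε0⟩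
    have heq : (fderiv ℝ (fderiv ℝ Φ) (0, t) (1, 0)) (0, 1)
        = fderiv ℝ XX (0, γ t) (1, v t) :=
      (uniqueDiffOn_Ici (0:ℝ) 0 Set.self_mem_Ici).eq_deriv _ e1 e2
    have : (fderiv ℝ (fderiv ℝ Φ) (0, t) (0, 1)) (1, 0)
        = X1 (γ t) + fderiv ℝ (X 0) (γ t) (v t) := by
      rw [sym, heq, hsplit]
    exact this ▸ hvD
  -- differentiability of F and F' on U
  have hFdiffAt : ∀ x ∈ U, DifferentiableAt ℝ F x := by
    intro x hx
    exact (hF.differentiableOn (by norm_num)).differentiableAt (hU.mem_nhds hx)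
  have hF2 : ContDiffOn ℝ 2 F' U := hF.fderiv_of_isOpen hU (by norm_num)
  have hF'diffAt : ∀ x ∈ U, DifferentiableAt ℝ F' x := by
    intro x hx
    exact (hF2.differentiableOn (by norm_num)).differentiableAt (hU.mem_nhds hx)
  have hXd0 : Differentiable ℝ (X 0) := (hXx 0).differentiable (by norm_num)
  -- differentiating the first-integral identity
  have hGzero : ∀ x ∈ U, ∀ u : Fin n → ℝ,
      (fderiv ℝ F' x u) (X 0 x) = - F' x (fderiv ℝ (X 0) x u) := by
    intro x hx u
    have hcomb : HasFDerivAt (fun y => F' y (X 0 y))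
        ((F' x).comp (fderiv ℝ (X 0) x) + (fderiv ℝ F' x).flip (X 0 x)) x :=
      (hF'diffAt x hx).hasFDerivAt.clm_apply (hXd0 x).hasFDerivAt
    have h0 : HasFDerivAt (fun y => F' y (X 0 y)) (0 : (Fin n → ℝ) →L[ℝ] ℝ) x := by
      refine (hasFDerivAt_const (0:ℝ) x).congr_of_eventuallyEq ?_
      filter_upwards [hU.mem_nhds hx] with y hy
      exact hFint y hy
    have := hcomb.unique h0
    have h := DFunLike.congr_fun this u
    simp only [ContinuousLinearMap.add_apply, ContinuousLinearMap.comp_apply,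
      ContinuousLinearMap.flip_apply, ContinuousLinearMap.zero_apply] at h
    linarith
  -- symmetry of the second derivative of F
  have hsymF : ∀ x ∈ U, ∀ a b, fderiv ℝ F' x a b = fderiv ℝ F' x b a := by
    intro x hx a b
    refine second_derivative_symmetric_of_eventually (f := F) (f' := F') ?_
      ((hF'diffAt x hx).hasFDerivAt) a b
    filter_upwards [hU.mem_nhds hx] with y hy
    exact (hFdiffAt y hy).hasFDerivAt
  -- the key function g
  set g : ℝ → ℝ := fun t => F' (γ t) (v t) with hgdef
  have hg' : ∀ t, HasDerivAt g (F' (γ t) (X1 (γ t))) t := by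
    intro t
    have c1 : HasDerivAt (fun s => F' (γ s)) (fderiv ℝ F' (γ t) (X 0 (γ t))) t :=
      by have := (hF'diffAt _ (hΓU t)).hasFDerivAt.comp_hasDerivAt t (hγ t); exact this
    have := c1.clm_apply (hv' t)
    have e : fderiv ℝ F' (γ t) (X 0 (γ t)) (v t)
        + F' (γ t) (X1 (γ t) + fderiv ℝ (X 0) (γ t) (v t)) = F' (γ t) (X1 (γ t)) := by
      rw [hsymF _ (hΓU t) (X 0 (γ t)) (v t), hGzero _ (hΓU t) (v t), map_add]
      ring
    rwa [e] at this
  -- continuity of the integrand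
  have hγcont : Continuous γ := by
    rw [continuous_iff_continuousAt]; exact fun t => (hγ t).continuousAt
  have hXXfd : Continuous (fderiv ℝ XX) := (hX.fderiv_right (m := 1) (by norm_num)).continuous
  have hX1cont : Continuous fun t => X1 (γ t) := by
    have : (fun t => X1 (γ t)) = fun t => fderiv ℝ XX (0, γ t) (1, 0) := by
      funext t; rw [hX1']
    rw [this]
    exact (hXXfd.comp (continuous_const.prodMk hγcont)).clm_apply continuous_const
  have hcont : Continuous fun t => F' (γ t) (X1 (γ t)) := by
    have hFγ : Continuous fun t => F' (γ t) :=
      (hF2.continuousOn.mono (fun y hy => hy)).comp_continuous hγcont hΓU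
    exact hFγ.clm_apply hX1cont
  -- FTC
  have hFTC : ∫ t in (0:ℝ)..T, F' (γ t) (X1 (γ t)) = g T - g 0 :=
    intervalIntegral.integral_eq_sub_of_hasDerivAt (fun t _ => hg' t)
      (hcont.intervalIntegrable 0 T)
  -- the displacement function φ
  have hTd : HasDerivAt Tε (deriv Tε 0) 0 := ((hTsm.differentiable (by norm_num)) 0).hasDerivAt
  have m1 : HasDerivAt (fun ε => Φ (ε, Tε ε)) (fderiv ℝ Φ (0, T) (1, deriv Tε 0)) 0 := by
    have hc : HasDerivAt (fun ε => ((ε : ℝ), Tε ε)) ((1:ℝ), deriv Tε 0) 0 :=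
      (hasDerivAt_id 0).prodMk hTd
    have := (hΦd (0, Tε 0)).hasFDerivAt.comp_hasDerivAt 0 hc
    rwa [hTε0] at this
  have hsplit1 : fderiv ℝ Φ (0, T) (1, deriv Tε 0)
      = v T + deriv Tε 0 • X 0 (γ T) := by
    have : ((1:ℝ), deriv Tε 0) = ((1:ℝ), (0:ℝ)) + deriv Tε 0 • ((0:ℝ), (1:ℝ)) := by
      simp [Prod.ext_iff]
    rw [this, map_add, _root_.map_smul, hw T]
  have hΦ0T : Φ (0, Tε 0) = γ T := by rw [hTε0]; exact hΦ0 T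
  have φ1 : HasDerivAt (fun ε => F (Φ (ε, Tε ε)))
      (F' (γ T) (v T + deriv Tε 0 • X 0 (γ T))) 0 := by
    have m1' : HasDerivAt (fun ε => Φ (ε, Tε ε)) (v T + deriv Tε 0 • X 0 (γ T)) 0 :=
      hsplit1 ▸ m1
    exact HasFDerivAt.comp_hasDerivAt_of_eq
      (hl := (hFdiffAt (γ T) (hΓU T)).hasFDerivAt) (hf := m1') (hy := hΦ0T.symm)
  have φ2 : HasDerivAt (fun ε => F (Φ (ε, 0))) (F' (γ 0) (v 0)) 0 := by
    have hm2 : HasDerivAt (fun ε => Φ (ε, 0)) (v 0) 0 := gB 0 0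
    have h0' : Φ (0, 0) = γ 0 := hΦ0 0
    exact HasFDerivAt.comp_hasDerivAt_of_eq
      (hl := (hFdiffAt (γ 0) (hΓU 0)).hasFDerivAt) (hf := hm2) (hy := h0'.symm)
  have hD : HasDerivAt (fun ε => F (Φ (ε, Tε ε)) - F (Φ (ε, 0)))
      (F' (γ T) (v T + deriv Tε 0 • X 0 (γ T)) - F' (γ 0) (v 0)) 0 := φ1.sub φ2
  -- φ vanishes on [0, ε0)
  have hφ0 : Set.EqOn (fun ε => F (Φ (ε, Tε ε)) - F (Φ (ε, 0)))
      (fun _ => (0:ℝ)) (Set.Ico (0:ℝ) ε0) := by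
    intro ε hε
    have := hperε ε hε 0
    rw [zero_add] at this
    simp [hΦdef, this]
  have hmem : Set.Ico (0:ℝ) ε0 ∈ nhdsWithin 0 (Set.Ici (0:ℝ)) := by
    rw [← Set.Ici_inter_Iio]
    exact Filter.inter_mem self_mem_nhdsWithin
      (mem_nhdsWithin_of_mem_nhds (Iio_mem_nhds hε0))
  have hDzero : F' (γ T) (v T + deriv Tε 0 • X 0 (γ T)) - F' (γ 0) (v 0) = 0 := by
    have e1 : HasDerivWithinAt (fun ε => F (Φ (ε, Tε ε)) - F (Φ (ε, 0)))
        (F' (γ T) (v T + deriv Tε 0 • X 0 (γ T)) - F' (γ 0) (v 0)) (Set.Ici 0) 0 :=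
      hD.hasDerivWithinAt
    have e2 : HasDerivWithinAt (fun ε => F (Φ (ε, Tε ε)) - F (Φ (ε, 0)))
        (0:ℝ) (Set.Ici 0) 0 := by
      refine (hasDerivWithinAt_const 0 (Set.Ici 0) (0:ℝ)).congr_of_eventuallyEq ?_ ?_
      · exact Filter.eventuallyEq_of_mem hmem hφ0
      · exact hφ0 ⟨le_refl 0, hε0⟩
    exact (uniqueDiffOn_Ici (0:ℝ) 0 Set.self_mem_Ici).eq_deriv _ e1 e2
  -- put everything together
  have hexp : F' (γ T) (v T + deriv Tε 0 • X 0 (γ T)) = F' (γ T) (v T) := by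
    rw [map_add, _root_.map_smul, hFint (γ T) (hΓU T)]
    simp
  have : g T - g 0 = 0 := by
    have : F' (γ T) (v T) - F' (γ 0) (v 0) = 0 := by rw [← hexp]; exact hDzero
    simpa [hgdef, hγT] using this
  rw [hFTC, this]
end

section
/- Let X_ε = X⁰ + ε X¹ + O(ε²) be a C² family of vector fields on ℝⁿ. Suppose ẋ = X⁰(x) has a hyperbolic equilibrium p and a homoclinic orbit γʰ(t) to p (i.e. γʰ(t) → p as t → ±∞), and a C³ first integral F on a neighborhood of the closure of the homoclinic orbit. If for ε > 0 small the system ẋ = X_ε(x) has a C³ first integral F_ε depending C²-smoothly on ε with F₀ = F on that neighborhood, then the improper integral ∫_{−∞}^{∞} dF(X¹)(γʰ(t)) dt converges (as a limit of integrals over [T_{−k}, T_k] for any sequences T_{±k} → ±∞) and equals zero. -/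
open MeasureTheory intervalIntegral Set Filter

/-- Persistence of a first integral near a homoclinic orbit to a hyperbolic
equilibrium implies convergence and vanishing of
`∫_{-∞}^{∞} dF(X¹)(γʰ(t)) dt` (Theorem 2.4 / `thm:main4`, equilibrium case). -/
theorem stmt2 (n : ℕ)
    (X : ℝ → (Fin n → ℝ) → (Fin n → ℝ))
    (hX : ContDiff ℝ 2 (fun q : ℝ × (Fin n → ℝ) => X q.1 q.2))
    (hXx : ∀ ε : ℝ, ContDiff ℝ 3 (X ε))
    (X0 X1 : (Fin n → ℝ) → (Fin n → ℝ))
    (hX0 : ∀ x, X0 x = X 0 x)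
    (hX1 : ∀ x, HasDerivAt (fun ε => X ε x) (X1 x) 0)
    (p : Fin n → ℝ) (hp : X0 p = 0)
    (A : Matrix (Fin n) (Fin n) ℝ)
    (hA : ∀ i j, A i j = fderiv ℝ X0 p (Pi.single j 1) i)
    (hhyp : ∀ z ∈ spectrum ℂ (A.map (Complex.ofReal)), z.re ≠ 0)
    (γh : ℝ → Fin n → ℝ)
    (hγh : ∀ t, HasDerivAt γh (X0 (γh t)) t)
    (hhomp : Tendsto γh atTop (nhds p)) (hhomm : Tendsto γh atBot (nhds p))
    (hnc : ∃ t, γh t ≠ p)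
    (U : Set (Fin n → ℝ)) (hU : IsOpen U) (hΓU : ∀ t, γh t ∈ U) (hpU : p ∈ U)
    (F : (Fin n → ℝ) → ℝ) (hF : ContDiffOn ℝ 3 F U)
    (hFint : ∀ x ∈ U, fderiv ℝ F x (X0 x) = 0)
    (ε0 : ℝ) (hε0 : 0 < ε0)
    (Fε : ℝ → (Fin n → ℝ) → ℝ)
    (hFεsm : ContDiffOn ℝ 2 (fun q : ℝ × (Fin n → ℝ) => Fε q.1 q.2) (Set.univ ×ˢ U))
    (hFεx : ∀ ε : ℝ, ContDiffOn ℝ 3 (Fε ε) U)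
    (hFε0 : ∀ x ∈ U, Fε 0 x = F x)
    (hFεint : ∀ ε ∈ Set.Ico (0:ℝ) ε0, ∀ x ∈ U, fderiv ℝ (Fε ε) x (X ε x) = 0) :
    ∀ a b : ℕ → ℝ, Tendsto a atTop atBot → Tendsto b atTop atTop →
      Tendsto (fun k => ∫ t in (a k)..(b k), fderiv ℝ F (γh t) (X1 (γh t)))
        atTop (nhds 0) := by
  intro a b ha hb
  set f : ℝ × (Fin n → ℝ) → ℝ := fun q => Fε q.1 q.2 with hf_def
  set V : Set (ℝ × (Fin n → ℝ)) := (Set.univ : Set ℝ) ×ˢ U with hV_def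
  have hVopen : IsOpen V := isOpen_univ.prod hU
  have hmemV : ∀ (ε : ℝ) {x : (Fin n → ℝ)}, x ∈ U → (ε, x) ∈ V := fun ε x hx => ⟨mem_univ _, hx⟩
  have hfC2 : ContDiffOn ℝ 2 f V := hFεsm
  have hΦ : ContDiffOn ℝ 1 (fderiv ℝ f) V :=
    hfC2.fderiv_of_isOpen hVopen (by norm_num)
  have hfdiff : ∀ (ε : ℝ) {x : (Fin n → ℝ)}, x ∈ U → DifferentiableAt ℝ f (ε, x) := fun ε x hx =>
    (hfC2.contDiffAt (hVopen.mem_nhds (hmemV ε hx))).differentiableAt two_ne_zero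
  have hΦdiff : ∀ (ε : ℝ) {x : (Fin n → ℝ)}, x ∈ U → DifferentiableAt ℝ (fderiv ℝ f) (ε, x) :=
    fun ε x hx => (hΦ.contDiffAt (hVopen.mem_nhds (hmemV ε hx))).differentiableAt one_ne_zero
  -- partial x-derivative of Fε ε in terms of fderiv of f
  have hpart : ∀ (ε : ℝ) {x : (Fin n → ℝ)}, x ∈ U → ∀ v : (Fin n → ℝ),
      fderiv ℝ (Fε ε) x v = fderiv ℝ f (ε, x) (0, v) := by
    intro ε x hx v
    have h1 : HasFDerivAt (Fε ε)
        ((fderiv ℝ f (ε, x)).comp (ContinuousLinearMap.inr ℝ ℝ (Fin n → ℝ))) x :=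
      (hfdiff ε hx).hasFDerivAt.comp x (hasFDerivAt_prodMk_right ε x)
    rw [h1.fderiv]; rfl
  -- the Melnikov function G
  set G : (Fin n → ℝ) → ℝ := fun y => fderiv ℝ f (0, y) (1, 0) with hG_def
  -- derivative of G
  have hGder : ∀ {x : (Fin n → ℝ)}, x ∈ U → HasFDerivAt G
      ((((fderiv ℝ (fderiv ℝ f) (0, x)).comp (ContinuousLinearMap.inr ℝ ℝ (Fin n → ℝ)))).flip
        ((1 : ℝ), (0 : (Fin n → ℝ)))) x := by
    intro x hx
    have hc : HasFDerivAt (fun y : (Fin n → ℝ) => fderiv ℝ f (0, y))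
        ((fderiv ℝ (fderiv ℝ f) (0, x)).comp (ContinuousLinearMap.inr ℝ ℝ (Fin n → ℝ))) x :=
      (hΦdiff 0 hx).hasFDerivAt.comp x (hasFDerivAt_prodMk_right (0 : ℝ) x)
    have hu : HasFDerivAt (fun _ : (Fin n → ℝ) => ((1 : ℝ), (0 : (Fin n → ℝ))))
        (0 : (Fin n → ℝ) →L[ℝ] ℝ × (Fin n → ℝ)) x := hasFDerivAt_const _ _
    have := hc.clm_apply hu
    simpa using this
  have hGder' : ∀ {x : (Fin n → ℝ)}, x ∈ U → ∀ v : (Fin n → ℝ),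
      fderiv ℝ G x v = fderiv ℝ (fderiv ℝ f) (0, x) (0, v) (1, 0) := by
    intro x hx v
    rw [(hGder hx).fderiv]; rfl
  -- the key identity
  have hkey : ∀ {x : (Fin n → ℝ)}, x ∈ U →
      fderiv ℝ F x (X1 x) = - fderiv ℝ G x (X0 x) := by
    intro x hx
    -- the function h ε = ∂ₓ F_ε (X_ε) evaluated along (ε, x)
    set h : ℝ → ℝ := fun ε => fderiv ℝ f (ε, x) (0, X ε x) with hh_def
    -- its derivative at 0
    have hc : HasDerivAt (fun ε : ℝ => fderiv ℝ f (ε, x))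
        (fderiv ℝ (fderiv ℝ f) (0, x) (1, 0)) 0 :=
      (hΦdiff 0 hx).hasFDerivAt.comp_hasDerivAt 0
        ((hasDerivAt_id (0 : ℝ)).prodMk (hasDerivAt_const 0 x))
    have hu : HasDerivAt (fun ε : ℝ => (((0 : ℝ) : ℝ), X ε x)) (((0 : ℝ)), X1 x) 0 := by
      have := (hasDerivAt_const (0 : ℝ) (0 : ℝ)).prodMk (hX1 x)
      simpa using this
    have hd : HasDerivAt h
        (fderiv ℝ (fderiv ℝ f) (0, x) (1, 0) (0, X 0 x)
          + fderiv ℝ f (0, x) (0, X1 x)) 0 := hc.clm_apply hu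
    -- h vanishes on [0, ε0)
    have hzero : ∀ ε ∈ Set.Ico (0 : ℝ) ε0, h ε = 0 := by
      intro ε hε
      rw [hh_def]
      simp only
      rw [← hpart ε hx (X ε x)]
      exact hFεint ε hε x hx
    -- hence the derivative of h at 0 (within Ici 0, where h ≡ 0) is 0
    have hIco : Set.Ico (0 : ℝ) ε0 ∈ nhdsWithin (0 : ℝ) (Set.Ici 0) := by
      rw [show Set.Ico (0 : ℝ) ε0 = Set.Ici 0 ∩ Set.Iio ε0 from rfl]
      exact Filter.inter_mem self_mem_nhdsWithin
        (nhdsWithin_le_nhds (Iio_mem_nhds hε0))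
    have heq : h =ᶠ[nhdsWithin (0 : ℝ) (Set.Ici 0)] fun _ => (0 : ℝ) := by
      filter_upwards [hIco] with ε hε using hzero ε hε
    have hzero0 : h 0 = 0 := hzero 0 ⟨le_refl _, hε0⟩
    have hW0 : HasDerivWithinAt h 0 (Set.Ici (0 : ℝ)) 0 := by
      have : HasDerivWithinAt (fun _ : ℝ => (0 : ℝ)) 0 (Set.Ici (0 : ℝ)) 0 :=
        (hasDerivAt_const _ _).hasDerivWithinAt
      exact this.congr_of_eventuallyEq heq hzero0
    have hW1 : HasDerivWithinAt h
        (fderiv ℝ (fderiv ℝ f) (0, x) (1, 0) (0, X 0 x)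
          + fderiv ℝ f (0, x) (0, X1 x)) (Set.Ici (0 : ℝ)) 0 := hd.hasDerivWithinAt
    have hEq0 : fderiv ℝ (fderiv ℝ f) (0, x) (1, 0) (0, X 0 x)
        + fderiv ℝ f (0, x) (0, X1 x) = 0 := by
      have hud := uniqueDiffOn_Ici (0 : ℝ) 0 Set.self_mem_Ici
      exact (hW1.derivWithin hud).symm.trans (hW0.derivWithin hud)
    -- symmetry of the second derivative
    have hsymm : fderiv ℝ (fderiv ℝ f) (0, x) (1, 0) (0, X 0 x)
        = fderiv ℝ (fderiv ℝ f) (0, x) (0, X 0 x) (1, 0) :=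
      (hfC2.contDiffAt (hVopen.mem_nhds (hmemV 0 hx))).isSymmSndFDerivAt (by simp) _ _
    -- the second term equals dF(X1)
    have hF0 : fderiv ℝ f (0, x) (0, X1 x) = fderiv ℝ F x (X1 x) := by
      rw [← hpart 0 hx (X1 x)]
      have : Fε 0 =ᶠ[nhds x] F := by
        filter_upwards [hU.mem_nhds hx] with y hy using hFε0 y hy
      rw [this.fderiv_eq]
    rw [hsymm, ← hGder' hx, ← hX0, hF0] at hEq0
    linarith
  -- continuity facts
  have hγcont : Continuous γh :=
    continuous_iff_continuousAt.2 fun t => (hγh t).continuousAt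
  have hXf : ContDiff ℝ 2 (fun q : ℝ × (Fin n → ℝ) => X q.1 q.2) := hX
  have hX1eq : ∀ x : (Fin n → ℝ), X1 x = fderiv ℝ (fun q : ℝ × (Fin n → ℝ) => X q.1 q.2) (0, x) (1, 0) := by
    intro x
    have hd : HasDerivAt (fun ε : ℝ => X ε x)
        (fderiv ℝ (fun q : ℝ × (Fin n → ℝ) => X q.1 q.2) (0, x) (1, 0)) 0 :=
      by
        have := (hXf.differentiable two_ne_zero (0, x)).hasFDerivAt.comp_hasDerivAt 0
          ((hasDerivAt_id (0 : ℝ)).prodMk (hasDerivAt_const 0 x))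
        exact this
    exact (hX1 x).unique hd
  have hX1cont : Continuous X1 := by
    have h1 : Continuous (fderiv ℝ (fun q : ℝ × (Fin n → ℝ) => X q.1 q.2)) :=
      hXf.continuous_fderiv two_ne_zero
    have : Continuous fun x : (Fin n → ℝ) =>
        fderiv ℝ (fun q : ℝ × (Fin n → ℝ) => X q.1 q.2) (0, x) (1, 0) :=
      (h1.comp (continuous_const.prodMk continuous_id)).clm_apply continuous_const
    exact (funext hX1eq : X1 = _) ▸ this
  have hFc : ContinuousOn (fderiv ℝ F) U :=
    hF.continuousOn_fderiv_of_isOpen hU (by norm_num)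
  have hIcont : Continuous fun t => fderiv ℝ F (γh t) (X1 (γh t)) :=
    (hFc.comp_continuous hγcont hΓU).clm_apply (hX1cont.comp hγcont)
  -- G is continuous on U
  have hGcont : ContinuousOn G U := by
    have h1 : ContinuousOn (fun y : (Fin n → ℝ) => fderiv ℝ f (0, y)) U :=
      hΦ.continuousOn.comp (continuous_const.prodMk continuous_id).continuousOn
        fun y hy => hmemV 0 hy
    exact h1.clm_apply continuousOn_const
  -- fundamental theorem of calculus
  have hftc : ∀ k, (∫ t in (a k)..(b k), fderiv ℝ F (γh t) (X1 (γh t)))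
      = G (γh (a k)) - G (γh (b k)) := by
    intro k
    have hderiv : ∀ t ∈ Set.uIcc (a k) (b k),
        HasDerivAt (fun s => -(G (γh s))) (fderiv ℝ F (γh t) (X1 (γh t))) t := by
      intro t _
      have h1 : HasDerivAt (fun s => G (γh s))
          (fderiv ℝ G (γh t) (X0 (γh t))) t := by
        have h2 := (hGder (hΓU t)).comp_hasDerivAt t (hγh t)
        rw [(hGder (hΓU t)).fderiv]
        exact h2
      have h3 := h1.neg
      rwa [← hkey (hΓU t)] at h3
    have hint : IntervalIntegrable (fun t => fderiv ℝ F (γh t) (X1 (γh t)))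
        volume (a k) (b k) := hIcont.intervalIntegrable _ _
    rw [intervalIntegral.integral_eq_sub_of_hasDerivAt hderiv hint]
    ring
  have hGp : ContinuousAt G p := hGcont.continuousAt (hU.mem_nhds hpU)
  have hta : Tendsto (fun k => G (γh (a k))) atTop (nhds (G p)) :=
    (hGp.tendsto.comp hhomm).comp ha
  have htb : Tendsto (fun k => G (γh (b k))) atTop (nhds (G p)) :=
    (hGp.tendsto.comp hhomp).comp hb
  have := hta.sub htb
  rw [sub_self] at this
  simpa only [hftc] using this
end

section
/- Consider the time-periodic planar system ẋ = J DH(x) + ε g(x,t) where H is C³, g is C² and T-periodic in t, and J is the 2×2 standard symplectic matrix. Suppose the unperturbed Hamiltonian system ẋ = J DH(x) has a periodic orbit q^α(t) of period T^α satisfying the resonance l T^α = m T with l, m coprime positive integers. If the autonomized system on ℝ² × (ℝ/Tℤ) has a C³ first integral F_ε(x,θ) = H(x) + O(ε) depending C²-smoothly on ε in a neighborhood of the orbit {(q^α(t−τ₀), t mod T)}, then there is a connected open set Π ⊂ ℝ/Tℤ containing τ₀ on which the subharmonic Melnikov function M^{m/l}(τ) = ∫₀^{mT} DH(q^α(t))·g(q^α(t),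 t+τ) dt vanishes identically. -/
open MeasureTheory intervalIntegral Set

/-- Relationship with the subharmonic Melnikov method (Theorem 4.3 /
`thm:sub-mel`): persistence of a first integral `F_ε = H + O(ε)` near a
resonant unperturbed periodic orbit forces the subharmonic Melnikov function to
vanish on a connected open set of phases containing `τ₀`. -/
theorem stmt11
    (H : (Fin 2 → ℝ) → ℝ) (hH : ContDiff ℝ 3 H)
    (g : (Fin 2 → ℝ) → ℝ → (Fin 2 → ℝ))
    (hg : ContDiff ℝ 2 (fun q : (Fin 2 → ℝ) × ℝ => g q.1 q.2))
    (T : ℝ) (hT : 0 < T) (hgper : ∀ x t, g x (t + T) = g x t)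
    (JDH : (Fin 2 → ℝ) → (Fin 2 → ℝ))
    (hJDH : ∀ x, JDH x
      = ![fderiv ℝ H x (Pi.single 1 1), -(fderiv ℝ H x (Pi.single 0 1))])
    (Tα : ℝ) (hTα : 0 < Tα)
    (qα : ℝ → Fin 2 → ℝ)
    (hq : ∀ t, HasDerivAt qα (JDH (qα t)) t)
    (hqper : ∀ t, qα (t + Tα) = qα t)
    (l m : ℕ) (hl : 0 < l) (hm : 0 < m) (hcop : Nat.Coprime l m)
    (hres : (l : ℝ) * Tα = (m : ℝ) * T)
    (τ0 : ℝ)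
    (U : Set ((Fin 2 → ℝ) × ℝ)) (hU : IsOpen U)
    (hΓU : ∀ t, (qα (t - τ0), t) ∈ U)
    (hUper : ∀ x θ, (x, θ) ∈ U → (x, θ + T) ∈ U)
    (ε0 : ℝ) (hε0 : 0 < ε0)
    (Fε : ℝ → (Fin 2 → ℝ) → ℝ → ℝ)
    (hFεsm : ContDiffOn ℝ 2
      (fun q : ℝ × ((Fin 2 → ℝ) × ℝ) => Fε q.1 q.2.1 q.2.2) (Set.univ ×ˢ U))
    (hFεx : ∀ ε : ℝ, ContDiffOn ℝ 3 (fun q : (Fin 2 → ℝ) × ℝ => Fε ε q.1 q.2) U)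
    (hFε0 : ∀ x θ, (x, θ) ∈ U → Fε 0 x θ = H x)
    (hFεper : ∀ ε x θ, Fε ε x (θ + T) = Fε ε x θ)
    (hFεint : ∀ ε ∈ Set.Ico (0:ℝ) ε0, ∀ q ∈ U,
      fderiv ℝ (fun q' : (Fin 2 → ℝ) × ℝ => Fε ε q'.1 q'.2) q
        (JDH q.1 + ε • g q.1 q.2, 1) = 0) :
    ∃ P : Set ℝ, IsOpen P ∧ IsConnected P ∧ τ0 ∈ P ∧
      ∀ τ ∈ P, ∫ t in (0:ℝ)..((m : ℝ) * T),
        fderiv ℝ H (qα t) (g (qα t) (t + τ)) = 0 := by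
  have hqcont : Continuous qα := by
    rw [continuous_iff_continuousAt]; exact fun t => (hq t).continuousAt
  set N : ℝ := (m : ℝ) * T with hNdef
  have hN : 0 < N := by positivity
  -- periodicity facts
  have hqk : ∀ (k : ℕ) (s : ℝ), qα (s + k * Tα) = qα s := by
    intro k
    induction k with
    | zero => simp
    | succ n ih =>
      intro s
      have h1 : s + ((n : ℕ) + 1 : ℕ) * Tα = (s + (n : ℕ) * Tα) + Tα := by push_cast; ring
      rw [h1, hqper, ih]
  have hqN : ∀ s, qα (s + N) = qα s := by
    intro s
    rw [← hres]
    exact hqk l s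
  have hgk : ∀ (k : ℕ) (x : Fin 2 → ℝ) (s : ℝ), g x (s + k * T) = g x s := by
    intro k
    induction k with
    | zero => simp
    | succ n ih =>
      intro x s
      have h1 : s + ((n : ℕ) + 1 : ℕ) * T = (s + (n : ℕ) * T) + T := by push_cast; ring
      rw [h1, hgper, ih]
  have hgN : ∀ (x : Fin 2 → ℝ) (s : ℝ), g x (s + N) = g x s := by
    intro x s; rw [hNdef]; exact hgk m x s
  have hFk : ∀ (k : ℕ) (ε : ℝ) (x : Fin 2 → ℝ) (s : ℝ), Fε ε x (s + k * T) = Fε ε x s := by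
    intro k
    induction k with
    | zero => simp
    | succ n ih =>
      intro ε x s
      have h1 : s + ((n : ℕ) + 1 : ℕ) * T = (s + (n : ℕ) * T) + T := by push_cast; ring
      rw [h1, hFεper, ih]
  have hFN : ∀ (ε : ℝ) (x : Fin 2 → ℝ), Fε ε x N = Fε ε x 0 := by
    intro ε x; rw [hNdef]; simpa using hFk m ε x 0
  -- tube lemma: a neighbourhood of τ0 on which the shifted orbit stays in U
  have hcontΦ : Continuous (fun z : ℝ × ℝ => ((qα (z.2 - z.1), z.2) : (Fin 2 → ℝ) × ℝ)) :=
    (hqcont.comp (continuous_snd.sub continuous_fst)).prodMk continuous_snd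
  obtain ⟨u, v, hu, hv, hτ0u, hIv, huv⟩ :=
    generalized_tube_lemma (isCompact_singleton (x := τ0)) (isCompact_Icc (a := (0:ℝ)) (b := N))
      (hcontΦ.isOpen_preimage U hU)
      (by
        rintro ⟨τ, t⟩ ⟨hτ, ht⟩
        simp only [mem_singleton_iff] at hτ
        subst hτ
        exact hΓU t)
  obtain ⟨δ, hδ, hball⟩ := Metric.isOpen_iff.1 hu τ0 (hτ0u rfl)
  refine ⟨Ioo (τ0 - δ) (τ0 + δ), isOpen_Ioo, isConnected_Ioo (by linarith),
    ⟨by linarith, by linarith⟩, ?_⟩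
  intro τ hτmem
  have hτu : τ ∈ u := hball (by rw [Real.ball_eq_Ioo]; exact hτmem)
  have hmem : ∀ t ∈ Icc (0:ℝ) N, ((qα (t - τ), t) : (Fin 2 → ℝ) × ℝ) ∈ U := by
    intro t ht
    exact huv (Set.mk_mem_prod hτu (hIv ht))
  -- the curve and its derivative
  have hp' : ∀ t : ℝ, HasDerivAt (fun s : ℝ => ((qα (s - τ), s) : (Fin 2 → ℝ) × ℝ))
      ((JDH (qα (t - τ)), 1) : (Fin 2 → ℝ) × ℝ) t := by
    intro t
    have h1 : HasDerivAt (fun s : ℝ => s - τ) 1 t := (hasDerivAt_id t).sub_const τ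
    have h2 : HasDerivAt (fun s : ℝ => qα (s - τ)) ((1:ℝ) • JDH (qα (t - τ))) t :=
      (hq (t - τ)).scomp t h1
    rw [one_smul] at h2
    exact h2.prodMk (hasDerivAt_id t)
  have hpcont : Continuous (fun s : ℝ => ((qα (s - τ), s) : (Fin 2 → ℝ) × ℝ)) :=
    (hqcont.comp (continuous_id.sub continuous_const)).prodMk continuous_id
  set G : ℝ × ((Fin 2 → ℝ) × ℝ) → ℝ := fun z => Fε z.1 z.2.1 z.2.2 with hGdef
  have hGopen : IsOpen ((Set.univ : Set ℝ) ×ˢ U) := isOpen_univ.prod hU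
  have hGdiff : ∀ (ε : ℝ) (q : (Fin 2 → ℝ) × ℝ), q ∈ U → DifferentiableAt ℝ G (ε, q) := by
    intro ε q hqU
    exact (hFεsm.differentiableOn (by norm_num)).differentiableAt
      (hGopen.mem_nhds ⟨mem_univ _, hqU⟩)
  -- partial x-derivative of Fε ε in terms of the full derivative of G
  have hfderG : ∀ (ε : ℝ) (q : (Fin 2 → ℝ) × ℝ), q ∈ U → ∀ v : (Fin 2 → ℝ) × ℝ,
      fderiv ℝ (fun q' : (Fin 2 → ℝ) × ℝ => Fε ε q'.1 q'.2) q v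
        = fderiv ℝ G (ε, q) (0, v) := by
    intro ε q hqU v
    have h1 : HasFDerivAt (fun q' : (Fin 2 → ℝ) × ℝ => Fε ε q'.1 q'.2)
        ((fderiv ℝ G (ε, q)).comp (ContinuousLinearMap.inr ℝ ℝ ((Fin 2 → ℝ) × ℝ))) q :=
      ((hGdiff ε q hqU).hasFDerivAt).comp q (hasFDerivAt_prodMk_right ε q)
    rw [h1.fderiv]
    rfl
  -- at ε = 0 the x-derivative is DH
  have hF0der : ∀ (q : (Fin 2 → ℝ) × ℝ), q ∈ U → ∀ v : Fin 2 → ℝ,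
      fderiv ℝ (fun q' : (Fin 2 → ℝ) × ℝ => Fε 0 q'.1 q'.2) q (v, 0)
        = fderiv ℝ H q.1 v := by
    intro q hqU v
    have heq : (fun q' : (Fin 2 → ℝ) × ℝ => Fε 0 q'.1 q'.2)
        =ᶠ[nhds q] (fun q' : (Fin 2 → ℝ) × ℝ => H q'.1) := by
      filter_upwards [hU.mem_nhds hqU] with q' hq' using hFε0 q'.1 q'.2 hq'
    rw [heq.fderiv_eq]
    have h2 : HasFDerivAt (fun q' : (Fin 2 → ℝ) × ℝ => H q'.1)
        ((fderiv ℝ H q.1).comp (ContinuousLinearMap.fst ℝ (Fin 2 → ℝ) ℝ)) q :=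
      ((hH.differentiable (by norm_num)) q.1).hasFDerivAt.comp q (hasFDerivAt_fst)
    rw [h2.fderiv]
    rfl
  -- the integrand family
  set w : ℝ → ℝ → ℝ := fun ε t => fderiv ℝ G (ε, (qα (t - τ), t)) (0, (g (qα (t - τ)) t, 0))
    with hwdef
  -- joint continuity of w on ℝ × [0, N]
  have hfdG : ContinuousOn (fderiv ℝ G) (Set.univ ×ˢ U) :=
    hFεsm.continuousOn_fderiv_of_isOpen hGopen (by norm_num)
  have hWcont : ContinuousOn (fun z : ℝ × ℝ => w z.1 z.2) (Set.univ ×ˢ Icc (0:ℝ) N) := by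
    apply ContinuousOn.clm_apply
    · apply hfdG.comp
        (Continuous.continuousOn (by fun_prop : Continuous
          (fun z : ℝ × ℝ => ((z.1, (qα (z.2 - τ), z.2)) : ℝ × ((Fin 2 → ℝ) × ℝ)))))
      rintro ⟨ε, t⟩ ⟨-, ht⟩
      exact ⟨mem_univ _, hmem t ht⟩
    · apply Continuous.continuousOn
      refine continuous_const.prodMk (Continuous.prodMk ?_ continuous_const)
      exact hg.continuous.comp
        ((hqcont.comp (continuous_snd.sub continuous_const)).prodMk continuous_snd)
  have hwcont : ∀ ε : ℝ, ContinuousOn (w ε) (Icc (0:ℝ) N) := by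
    intro ε
    exact hWcont.comp ((continuous_const.prodMk continuous_id).continuousOn)
      (fun t ht => ⟨mem_univ _, ht⟩)
  -- FTC: the integral of w ε vanishes for 0 < ε < ε0
  have hFTC : ∀ ε ∈ Ioo (0:ℝ) ε0, (∫ t in (0:ℝ)..N, w ε t) = 0 := by
    intro ε hε
    have hder : ∀ t ∈ uIcc (0:ℝ) N,
        HasDerivAt (fun s : ℝ => Fε ε (qα (s - τ)) s) (-(ε * w ε t)) t := by
      intro t ht
      rw [uIcc_of_le hN.le] at ht
      have hpt : ((qα (t - τ), t) : (Fin 2 → ℝ) × ℝ) ∈ U := hmem t ht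
      have hDF : HasFDerivAt (fun q : (Fin 2 → ℝ) × ℝ => Fε ε q.1 q.2)
          (fderiv ℝ (fun q : (Fin 2 → ℝ) × ℝ => Fε ε q.1 q.2) (qα (t - τ), t))
          ((qα (t - τ), t)) :=
        (((hFεx ε).differentiableOn (by norm_num)).differentiableAt
          (hU.mem_nhds hpt)).hasFDerivAt
      have hcomp0 := HasFDerivAt.comp_hasDerivAt
        (f := fun s : ℝ => ((qα (s - τ), s) : (Fin 2 → ℝ) × ℝ)) t hDF (hp' t)
      have hcomp : HasDerivAt (fun s : ℝ => Fε ε (qα (s - τ)) s)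
          (fderiv ℝ (fun q : (Fin 2 → ℝ) × ℝ => Fε ε q.1 q.2) (qα (t - τ), t)
            ((JDH (qα (t - τ)), 1) : (Fin 2 → ℝ) × ℝ)) t := hcomp0
      have hint0 : fderiv ℝ (fun q : (Fin 2 → ℝ) × ℝ => Fε ε q.1 q.2) (qα (t - τ), t)
          ((JDH (qα (t - τ)) + ε • g (qα (t - τ)) t, 1) : (Fin 2 → ℝ) × ℝ) = 0 :=
        hFεint ε ⟨hε.1.le, hε.2⟩ (qα (t - τ), t) hpt
      have hsplit : ((JDH (qα (t - τ)), 1) : (Fin 2 → ℝ) × ℝ)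
          = ((JDH (qα (t - τ)) + ε • g (qα (t - τ)) t, 1) : (Fin 2 → ℝ) × ℝ)
            - ε • ((g (qα (t - τ)) t, 0) : (Fin 2 → ℝ) × ℝ) := by
        rw [Prod.smul_mk, smul_zero, Prod.mk_sub_mk]
        simp
      rw [hsplit, map_sub, hint0, ContinuousLinearMap.map_smul, zero_sub, smul_eq_mul] at hcomp
      rw [hfderG ε (qα (t - τ), t) hpt] at hcomp
      exact hcomp
    have hint : IntervalIntegrable (fun t => -(ε * w ε t)) volume 0 N := by
      apply ContinuousOn.intervalIntegrable
      rw [uIcc_of_le hN.le]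
      exact ((continuousOn_const.mul (hwcont ε)).neg)
    have heq := intervalIntegral.integral_eq_sub_of_hasDerivAt hder hint
    have hφ : Fε ε (qα (N - τ)) N = Fε ε (qα (0 - τ)) 0 := by
      rw [show N - τ = -τ + N by ring, hqN (-τ), hFN, zero_sub]
    rw [hφ, sub_self] at heq
    rw [intervalIntegral.integral_neg, intervalIntegral.integral_const_mul] at heq
    have heq2 : -(ε * ∫ t in (0:ℝ)..N, w ε t) = 0 := heq
    have hεne : ε ≠ 0 := ne_of_gt hε.1
    have := neg_eq_zero.mp heq2
    exact (mul_eq_zero.mp this).resolve_left hεne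
  -- bound for dominated convergence
  obtain ⟨C, hC⟩ := (IsCompact.exists_bound_of_continuousOn
    ((isCompact_Icc (a := (-1:ℝ)) (b := 1)).prod (isCompact_Icc (a := (0:ℝ)) (b := N)))
    (hWcont.mono (Set.prod_mono (subset_univ _) subset_rfl)))
  -- dominated convergence: the integral is right-continuous in ε at 0
  have hsubset : Set.uIoc (0:ℝ) N ⊆ Icc (0:ℝ) N := by
    rw [uIoc_of_le hN.le]; exact Ioc_subset_Icc_self
  have htend : Filter.Tendsto (fun ε => ∫ t in (0:ℝ)..N, w ε t) (nhdsWithin 0 (Ioi 0))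
      (nhds (∫ t in (0:ℝ)..N, w 0 t)) := by
    apply intervalIntegral.tendsto_integral_filter_of_dominated_convergence (fun _ => C)
    · apply Filter.Eventually.of_forall
      intro ε
      exact ((hwcont ε).mono hsubset).aestronglyMeasurable measurableSet_uIoc
    · filter_upwards [Ioc_mem_nhdsGT (zero_lt_one)] with ε hε
      apply Filter.Eventually.of_forall
      intro t ht
      exact hC (ε, t) ⟨⟨by linarith [hε.1], hε.2⟩, hsubset ht⟩
    · exact intervalIntegrable_const
    · apply Filter.Eventually.of_forall
      intro t ht
      have hpt : ((qα (t - τ), t) : (Fin 2 → ℝ) × ℝ) ∈ U := hmem t (hsubset ht)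
      have h1 : ContinuousAt (fderiv ℝ G) ((0:ℝ), (qα (t - τ), t)) :=
        hfdG.continuousAt (hGopen.mem_nhds ⟨mem_univ _, hpt⟩)
      have h2' : ContinuousAt
          (fun ε : ℝ => ((ε, (qα (t - τ), t)) : ℝ × ((Fin 2 → ℝ) × ℝ))) 0 :=
        (continuous_id.prodMk continuous_const).continuousAt
      have h2 : ContinuousAt (fun ε : ℝ => fderiv ℝ G (ε, (qα (t - τ), t))) 0 :=
        ContinuousAt.comp (x := (0:ℝ))
          (f := fun ε : ℝ => ((ε, (qα (t - τ), t)) : ℝ × ((Fin 2 → ℝ) × ℝ)))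
          (g := fderiv ℝ G) h1 h2'
      have h3 : ContinuousAt (fun ε : ℝ => w ε t) 0 :=
        ContinuousAt.comp (x := (0:ℝ))
          (f := fun ε : ℝ => fderiv ℝ G (ε, (qα (t - τ), t)))
          ((ContinuousLinearMap.apply ℝ ℝ
            (((0 : ℝ), ((g (qα (t - τ)) t, 0) : (Fin 2 → ℝ) × ℝ)) :
              ℝ × ((Fin 2 → ℝ) × ℝ))).continuous.continuousAt) h2
      exact h3.tendsto.mono_left nhdsWithin_le_nhds
  have hzero : ∀ᶠ ε in nhdsWithin (0:ℝ) (Ioi 0), (∫ t in (0:ℝ)..N, w ε t) = 0 := by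
    filter_upwards [Ioo_mem_nhdsGT_of_mem (by constructor <;> [exact le_refl 0; exact hε0])]
      with ε hε using hFTC ε hε
  have hI0 : (∫ t in (0:ℝ)..N, w 0 t) = 0 := by
    have h2 : Filter.Tendsto (fun ε => ∫ t in (0:ℝ)..N, w ε t) (nhdsWithin 0 (Ioi 0))
        (nhds 0) := Filter.Tendsto.congr' (Filter.EventuallyEq.symm hzero) tendsto_const_nhds
    exact tendsto_nhds_unique htend h2
  -- identify w 0 with the Melnikov integrand
  have hI0' : (∫ t in (0:ℝ)..N, fderiv ℝ H (qα (t - τ)) (g (qα (t - τ)) t)) = 0 := by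
    have hcongr : (∫ t in (0:ℝ)..N, fderiv ℝ H (qα (t - τ)) (g (qα (t - τ)) t))
        = ∫ t in (0:ℝ)..N, w 0 t := by
      apply intervalIntegral.integral_congr
      intro t ht
      rw [uIcc_of_le hN.le] at ht
      have hpt : ((qα (t - τ), t) : (Fin 2 → ℝ) × ℝ) ∈ U := hmem t ht
      have h5 := hfderG 0 (qα (t - τ), t) hpt (g (qα (t - τ)) t, 0)
      have h6 := hF0der (qα (t - τ), t) hpt (g (qα (t - τ)) t)
      rw [hwdef]
      dsimp only
      rw [← h5]
      exact h6.symm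
    rw [hcongr]
    exact hI0
  -- change of variables and periodicity
  have hfper : Function.Periodic (fun s => fderiv ℝ H (qα s) (g (qα s) (s + τ))) N := by
    intro s
    simp only
    rw [hqN s, show s + N + τ = (s + τ) + N by ring, hgN]
  have h1 : (∫ t in (0:ℝ)..N, fderiv ℝ H (qα (t - τ)) (g (qα (t - τ)) t))
      = ∫ t in (0:ℝ) - τ..N - τ, fderiv ℝ H (qα t) (g (qα t) (t + τ)) := by
    rw [← intervalIntegral.integral_comp_sub_right
      (fun s => fderiv ℝ H (qα s) (g (qα s) (s + τ))) τ]
    apply intervalIntegral.integral_congr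
    intro t ht
    simp [sub_add_cancel]
  have h2 : (∫ t in (0:ℝ) - τ..N - τ, fderiv ℝ H (qα t) (g (qα t) (t + τ)))
      = ∫ t in (0:ℝ)..N, fderiv ℝ H (qα t) (g (qα t) (t + τ)) := by
    have h3 := hfper.intervalIntegral_add_eq (-τ) 0
    rw [show (0:ℝ) - τ = -τ by ring, show N - τ = -τ + N by ring, h3, zero_add]
  rw [← h2, ← h1]
  exact hI0'
end
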